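/- Evenness and nonnegativity of the z-exponent of the Bollobás–Riordan polynomial. Let G = (H, σ, θ) be a combinatorial map encoding an orientable ribbon graph. Then for every subset F ⊆ E, the integer k(F) − bc(F) + n(F) is nonnegative and even (it equals twice the genus of the orientable surface F). -/

import Mathlib

open Finset
open scoped Classical

/-- The permutation `θ_F` acting as `θ` on the half-edges belonging to edges of the
spanning subgraph (encoded by the `θ`-invariant set `S` of half-edges) and as the
identity elsewhere.  Defined whenever `S` is `θ`-invariant and `θ` is an involution
(and as the identity permutation otherwise). -/
noncomputable def restrictPerm {H : Type*} [DecidableEq H] (θ : Equiv.Perm H) (S : Finset H) :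
    Equiv.Perm H :=
  if hcl : (∀ a ∈ S, θ a ∈ S) ∧ (∀ a, θ (θ a) = a) then
    { toFun := fun a => if a ∈ S then θ a else a
      invFun := fun a => if a ∈ S then θ a else a
      left_inv := fun a => by
        by_cases h : a ∈ S
        · simp [h, hcl.1 a h, hcl.2 a]
        · simp [h]
      right_inv := fun a => by
        by_cases h : a ∈ S
        · simp [h, hcl.1 a h, hcl.2 a]
        · simp [h] }
  else 1

/-- The number of orbits of the cyclic group generated by a permutation. -/
noncomputable def permOrbits {H : Type*} [Fintype H] (π : Equiv.Perm H) : ℕ :=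
  Nat.card (MulAction.orbitRel.Quotient (Subgroup.zpowers π) H)

/-- `v(G)`: the number of vertices, i.e. the number of orbits of `σ`. -/
noncomputable def vCount {H : Type*} [Fintype H] (σ : Equiv.Perm H) : ℕ := permOrbits σ

/-- `bc(F)`: the number of boundary components of the spanning subgraph, i.e. the
number of orbits of `σ ∘ θ_F`. -/
noncomputable def bcCount {H : Type*} [Fintype H] [DecidableEq H]
    (σ θ : Equiv.Perm H) (S : Finset H) : ℕ :=
  permOrbits (σ * restrictPerm θ S)

/-- `k(F)`: the number of connected components of the spanning subgraph, i.e. the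
number of orbits of the subgroup generated by `σ` and `θ_F`. -/
noncomputable def kCount {H : Type*} [Fintype H] [DecidableEq H]
    (σ θ : Equiv.Perm H) (S : Finset H) : ℕ :=
  Nat.card (MulAction.orbitRel.Quotient
    (Subgroup.closure {σ, restrictPerm θ S} : Subgroup (Equiv.Perm H)) H)

/-- `e(F)`: the number of edges of the spanning subgraph, i.e. half the number of
half-edges in `S` (as an integer, for use in exponents). -/
def eCount {H : Type*} (S : Finset H) : ℤ := (S.card / 2 : ℕ)

/-- `r(F) = v(G) - k(F)`: the rank of the spanning subgraph. -/
noncomputable def rCount {H : Type*} [Fintype H] [DecidableEq H]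
    (σ θ : Equiv.Perm H) (S : Finset H) : ℤ :=
  (vCount σ : ℤ) - (kCount σ θ S : ℤ)

/-- `n(F) = e(F) - r(F)`: the nullity of the spanning subgraph. -/
noncomputable def nCount {H : Type*} [Fintype H] [DecidableEq H]
    (σ θ : Equiv.Perm H) (S : Finset H) : ℤ :=
  eCount S - rCount σ θ S

/-- The spanning subgraphs `F ⊆ E`, encoded as the `θ`-invariant subsets of the
set of half-edges. -/
def spanningSets {H : Type*} [Fintype H] [DecidableEq H] (θ : Equiv.Perm H) :
    Finset (Finset H) :=
  Finset.univ.filter (fun S => ∀ a ∈ S, θ a ∈ S)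

set_option linter.unusedSectionVars false
set_option maxHeartbeats 1000000

namespace BRAux

open Equiv Equiv.Perm MulAction Subgroup

variable {H : Type*} [Fintype H] [DecidableEq H]


open Equiv Equiv.Perm MulAction Subgroup

variable {H : Type*} [Fintype H] [DecidableEq H]

/-- number of orbits of a subgroup of permutations -/
noncomputable def oc (G : Subgroup (Equiv.Perm H)) : ℕ :=
  Nat.card (MulAction.orbitRel.Quotient G H)

lemma oc_congr {G G' : Subgroup (Equiv.Perm H)} (h : G = G') : oc G = oc G' := by
  subst h; rfl

lemma rel_of_mem {G : Subgroup (Equiv.Perm H)} {g : Equiv.Perm H} (hg : g ∈ G) (x : H) :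
    orbitRel G H (g x) x := by
  rw [orbitRel_apply]
  exact ⟨⟨g, hg⟩, rfl⟩

lemma oc_le {G G' : Subgroup (Equiv.Perm H)}
    (h : ∀ x y : H, orbitRel G H x y → orbitRel G' H x y) : oc G' ≤ oc G := by
  have hsurj : Function.Surjective
      (Quotient.map' (id : H → H) (fun {x y} hxy => h x y hxy) :
        orbitRel.Quotient G H → orbitRel.Quotient G' H) := by
    intro q
    induction q using Quotient.inductionOn' with
    | h x => exact ⟨Quotient.mk'' x, rfl⟩
  exact Nat.card_le_card_of_surjective _ hsurj

lemma oc_lt {G G' : Subgroup (Equiv.Perm H)} {a b : H}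
    (h : ∀ x y : H, orbitRel G H x y → orbitRel G' H x y)
    (hab : ¬ orbitRel G H a b) (hab' : orbitRel G' H a b) :
    oc G' < oc G := by
  letI : Fintype (orbitRel.Quotient G H) := Fintype.ofFinite _
  letI : Fintype (orbitRel.Quotient G' H) := Fintype.ofFinite _
  rw [oc, oc, Nat.card_eq_fintype_card, Nat.card_eq_fintype_card]
  apply Fintype.card_lt_of_surjective_not_injective
    (Quotient.map' (id : H → H) (fun {x y} hxy => h x y hxy))
  · intro q
    induction q using Quotient.inductionOn' with
    | h x => exact ⟨Quotient.mk'' x, rfl⟩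
  · intro hinj
    have h1 : (Quotient.mk'' a : orbitRel.Quotient G H) = Quotient.mk'' b := by
      apply hinj
      simpa only [Quotient.map'_mk'', id] using Quotient.sound' hab'
    exact hab (Quotient.eq''.mp h1)

lemma oc_le_succ {G G' : Subgroup (Equiv.Perm H)} {b : H}
    (h : ∀ x y : H, orbitRel G H x y → orbitRel G' H x y)
    (h2 : ∀ x y : H, orbitRel G' H x y →
      orbitRel G H x y ∨ orbitRel G H x b ∨ orbitRel G H y b) :
    oc G ≤ oc G' + 1 := by
  letI : Fintype (orbitRel.Quotient G H) := Fintype.ofFinite _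
  letI : Fintype (orbitRel.Quotient G' H) := Fintype.ofFinite _
  set f : orbitRel.Quotient G H → orbitRel.Quotient G' H :=
    Quotient.map' (id : H → H) (fun {x y} hxy => h x y hxy) with hf
  set q0 : orbitRel.Quotient G H := Quotient.mk'' b with hq0
  have key : ∀ q1 q2 : orbitRel.Quotient G H, f q1 = f q2 → q1 = q2 ∨ q1 = q0 ∨ q2 = q0 := by
    intro q1 q2
    induction q1 using Quotient.inductionOn' with
    | h u =>
    induction q2 using Quotient.inductionOn' with
    | h v =>
    intro hEq
    have huv : orbitRel G' H u v := by
      have : (Quotient.mk'' u : orbitRel.Quotient G' H) = Quotient.mk'' v := by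
        simpa only [hf, Quotient.map'_mk'', id] using hEq
      exact Quotient.eq''.mp this
    rcases h2 u v huv with hc | hc | hc
    · exact Or.inl (Quotient.sound' hc)
    · exact Or.inr (Or.inl (Quotient.sound' hc))
    · exact Or.inr (Or.inr (Quotient.sound' hc))
  have hinj : Function.Injective
      (fun q : {q : orbitRel.Quotient G H // q ≠ q0} => f q.1) := by
    rintro ⟨q1, h1⟩ ⟨q2, h2'⟩ hEq
    rcases key q1 q2 hEq with hc | hc | hc
    · exact Subtype.ext hc
    · exact absurd hc h1
    · exact absurd hc h2'
  have hcard : Fintype.card {q : orbitRel.Quotient G H // q ≠ q0}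
      ≤ Fintype.card (orbitRel.Quotient G' H) := Fintype.card_le_of_injective _ hinj
  have hcompl : Fintype.card {q : orbitRel.Quotient G H // q ≠ q0}
      = Fintype.card (orbitRel.Quotient G H) - 1 := by
    have := Fintype.card_subtype_compl (fun q : orbitRel.Quotient G H => q = q0)
    rw [Fintype.card_subtype_eq] at this
    convert this using 2
  have hpos : 0 < Fintype.card (orbitRel.Quotient G H) := Fintype.card_pos_iff.mpr ⟨q0⟩
  rw [oc, oc, Nat.card_eq_fintype_card, Nat.card_eq_fintype_card]
  omega





lemma inv_maps_to (g : Equiv.Perm H) (T : Set H) (hT : ∀ x ∈ T, g x ∈ T) :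
    ∀ x ∈ T, g⁻¹ x ∈ T := by
  have hpow : ∀ n : ℕ, ∀ x ∈ T, (g ^ n) x ∈ T := by
    intro n
    induction n with
    | zero => intro x hx; simpa using hx
    | succ n ih => intro x hx; rw [pow_succ, Equiv.Perm.mul_apply]; exact ih _ (hT x hx)
  intro x hx
  have h1 : g⁻¹ = g ^ (orderOf g - 1) := by
    have h2 : g * g ^ (orderOf g - 1) = 1 := by
      rw [← pow_succ', Nat.sub_add_cancel (orderOf_pos g)]
      exact pow_orderOf_eq_one g
    exact inv_eq_of_mul_eq_one_right h2
  rw [h1]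
  exact hpow _ x hx

lemma closure_invariant {Sg : Set (Equiv.Perm H)} (T : Set H)
    (hT : ∀ g ∈ Sg, ∀ x ∈ T, g x ∈ T) :
    ∀ g ∈ Subgroup.closure Sg, ∀ x ∈ T, g x ∈ T := by
  intro g hg
  induction hg using Subgroup.closure_induction with
  | mem g hgmem => exact hT g hgmem
  | one => intro x hx; simpa using hx
  | mul g g' hgc hg'c pg pg' =>
    intro x hx
    rw [Equiv.Perm.mul_apply]
    exact pg _ (pg' _ hx)
  | inv g hgc pg => exact inv_maps_to g T pg

lemma closure_step {Sg : Set (Equiv.Perm H)} {G' : Subgroup (Equiv.Perm H)}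
    (h : ∀ g ∈ Sg, ∀ x : H, orbitRel G' H (g x) x) :
    ∀ g ∈ Subgroup.closure Sg, ∀ x : H, orbitRel G' H (g x) x := by
  intro g hg
  induction hg using Subgroup.closure_induction with
  | mem g hgmem => exact h g hgmem
  | one => intro x; simpa using Setoid.refl' _ x
  | mul g g' hgc hg'c pg pg' =>
    intro x
    rw [Equiv.Perm.mul_apply]
    exact Setoid.trans' _ (pg (g' x)) (pg' x)
  | inv g hgc pg =>
    intro x
    have h1 := pg (g⁻¹ x)
    rw [show g (g⁻¹ x) = x from g.apply_symm_apply x] at h1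
    exact Setoid.symm' _ h1

lemma rel_mono {G G' : Subgroup (Equiv.Perm H)} (hGG : G ≤ G') :
    ∀ x y : H, orbitRel G H x y → orbitRel G' H x y := by
  intro x y hxy
  rw [orbitRel_apply] at hxy ⊢
  obtain ⟨⟨g, hg⟩, rfl⟩ := hxy
  exact ⟨⟨g, hGG hg⟩, rfl⟩

lemma rel_zpowers_iff (τ : Equiv.Perm H) (x y : H) :
    orbitRel (Subgroup.zpowers τ) H x y ↔ τ.SameCycle y x := by
  rw [orbitRel_apply, MulAction.mem_orbit_iff]
  constructor
  · rintro ⟨⟨g, hg⟩, rfl⟩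
    obtain ⟨i, rfl⟩ := Subgroup.mem_zpowers_iff.mp hg
    exact ⟨i, rfl⟩
  · rintro ⟨i, hi⟩
    exact ⟨⟨τ ^ i, zpow_mem (Subgroup.mem_zpowers τ) i⟩, hi⟩

lemma sameCycle_of_pow {τ : Equiv.Perm H} {x y : H} {n : ℕ} (h : (τ ^ n) x = y) :
    τ.SameCycle x y :=
  ⟨(n : ℤ), by rw [zpow_natCast]; exact h⟩




lemma sameCycle_of_pow' {τ : Equiv.Perm H} {x y : H} {n : ℕ} (h : (τ ^ n) x = y) :
    τ.SameCycle x y :=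
  ⟨(n : ℤ), by rw [zpow_natCast]; exact h⟩

lemma iso_pow (τ : Equiv.Perm H) (a b x : H) (ha : ¬ τ.SameCycle x a)
    (hb : ¬ τ.SameCycle x b) :
    ∀ n : ℕ, ((τ * Equiv.swap a b) ^ n) x = (τ ^ n) x := by
  intro n
  induction n with
  | zero => rfl
  | succ n ih =>
    have h1 : (τ ^ n) x ≠ a := fun hc => ha (sameCycle_of_pow' hc)
    have h2 : (τ ^ n) x ≠ b := fun hc => hb (sameCycle_of_pow' hc)
    rw [pow_succ', Equiv.Perm.mul_apply, ih, Equiv.Perm.mul_apply,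
      Equiv.swap_apply_of_ne_of_ne h1 h2, pow_succ', Equiv.Perm.mul_apply]

lemma iso_sameCycle {τ : Equiv.Perm H} {a b x y : H} (ha : ¬ τ.SameCycle x a)
    (hb : ¬ τ.SameCycle x b) (h : (τ * Equiv.swap a b).SameCycle x y) :
    τ.SameCycle x y := by
  obtain ⟨n, _, hn⟩ := h.exists_pow_eq'
  rw [iso_pow τ a b x ha hb n] at hn
  exact sameCycle_of_pow' hn

lemma merge_connect {τ : Equiv.Perm H} {a b : H} (hab : a ≠ b) (h : ¬ τ.SameCycle a b) :
    (τ * Equiv.swap a b).SameCycle a b := by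
  set τ' := τ * Equiv.swap a b with hτ'
  have hP : ∃ n : ℕ, 0 < n ∧ (τ ^ n) b = b :=
    ⟨orderOf τ, orderOf_pos τ, by rw [pow_orderOf_eq_one]; rfl⟩
  set j := Nat.find hP with hj
  obtain ⟨hjpos, hjb⟩ := Nat.find_spec hP
  have key : ∀ k : ℕ, 1 ≤ k → k ≤ j → (τ' ^ k) a = (τ ^ k) b := by
    intro k
    induction k with
    | zero => omega
    | succ n ih =>
      intro _ hle
      rcases Nat.eq_zero_or_pos n with rfl | hn
      · simp [hτ', pow_one, Equiv.Perm.mul_apply, Equiv.swap_apply_left]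
      · have hnj : n < j := by omega
        have h1 : (τ ^ n) b ≠ b := fun hc => Nat.find_min hP hnj ⟨hn, hc⟩
        have h2 : (τ ^ n) b ≠ a := fun hc => h (sameCycle_of_pow' hc).symm
        rw [pow_succ', Equiv.Perm.mul_apply, ih hn (by omega), hτ',
          Equiv.Perm.mul_apply, Equiv.swap_apply_of_ne_of_ne h2 h1,
          pow_succ', Equiv.Perm.mul_apply]
  exact sameCycle_of_pow' ((key j hjpos le_rfl).trans hjb)

lemma split_disconnect {τ : Equiv.Perm H} {a b : H} (hab : a ≠ b) (h : τ.SameCycle a b) :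
    ¬ (τ * Equiv.swap a b).SameCycle a b := by
  set τ' := τ * Equiv.swap a b with hτ'
  obtain ⟨m, hm0, _, hmb⟩ := (h.symm).exists_pow_eq''
  have hQ : ∃ n : ℕ, 0 < n ∧ (τ ^ n) b = a := ⟨m, hm0, hmb⟩
  have hP : ∃ n : ℕ, 0 < n ∧ ((τ ^ n) b = a ∨ (τ ^ n) b = b) := ⟨m, hm0, Or.inl hmb⟩
  set j := Nat.find hP with hj
  obtain ⟨hjpos, hjor⟩ := Nat.find_spec hP
  have hja : (τ ^ j) b = a := by
    rcases hjor with h1 | h1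
    · exact h1
    · exfalso
      set m' := Nat.find hQ with hm'
      obtain ⟨hm'pos, hm'a⟩ := Nat.find_spec hQ
      have hjm' : j ≤ m' := Nat.find_min' hP ⟨hm'pos, Or.inl hm'a⟩
      have hne : Nat.find hP ≠ Nat.find hQ := by
        intro he
        rw [← he, h1] at hm'a
        exact hab hm'a.symm
      have hcomp : (τ ^ (m' - j)) b = a := by
        have hsplit : (τ : Equiv.Perm H) ^ m' = τ ^ (m' - j) * τ ^ j := by
          rw [← pow_add, Nat.sub_add_cancel hjm']
        rw [hsplit, Equiv.Perm.mul_apply, h1] at hm'a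
        exact hm'a
      exact Nat.find_min hQ (show m' - j < m' by omega) ⟨by omega, hcomp⟩
  set T : Set H := {x | ∃ k : ℕ, 1 ≤ k ∧ k ≤ j ∧ (τ ^ k) b = x} with hT
  have haT : a ∈ T := ⟨j, hjpos, le_rfl, hja⟩
  have hbT : b ∉ T := by
    rintro ⟨k, hk1, hkj, hkb⟩
    rcases eq_or_lt_of_le hkj with rfl | hkj'
    · rw [hja] at hkb; exact hab hkb
    · exact Nat.find_min hP hkj' ⟨hk1, Or.inr hkb⟩
  have hTinv : ∀ x ∈ T, τ' x ∈ T := by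
    rintro x ⟨k, hk1, hkj, rfl⟩
    rcases eq_or_lt_of_le hkj with rfl | hkj'
    · rw [hja]
      refine ⟨1, le_rfl, hjpos, ?_⟩
      simp [hτ', pow_one, Equiv.Perm.mul_apply, Equiv.swap_apply_left]
    · have hxa : (τ ^ k) b ≠ a := fun hc => Nat.find_min hP hkj' ⟨hk1, Or.inl hc⟩
      have hxb : (τ ^ k) b ≠ b := fun hc => Nat.find_min hP hkj' ⟨hk1, Or.inr hc⟩
      refine ⟨k + 1, by omega, by omega, ?_⟩
      rw [pow_succ', Equiv.Perm.mul_apply, hτ', Equiv.Perm.mul_apply,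
        Equiv.swap_apply_of_ne_of_ne hxa hxb]
  have hTpow : ∀ n : ℕ, (τ' ^ n) a ∈ T := by
    intro n
    induction n with
    | zero => simpa using haT
    | succ n ih =>
      rw [pow_succ', Equiv.Perm.mul_apply]
      exact hTinv _ ih
  intro hcon
  obtain ⟨n, _, hn⟩ := hcon.exists_pow_eq'
  rw [← hn] at hbT
  exact hbT (hTpow n)

lemma sameCycle_le_of_step {ρ τ : Equiv.Perm H} (hstep : ∀ x : H, ρ.SameCycle x (τ x)) :
    ∀ {x y : H}, τ.SameCycle x y → ρ.SameCycle x y := by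
  have hpow : ∀ (n : ℕ) (x : H), ρ.SameCycle x ((τ ^ n) x) := by
    intro n
    induction n with
    | zero => intro x; simpa using Equiv.Perm.SameCycle.refl ρ x
    | succ n ih =>
      intro x
      rw [pow_succ', Equiv.Perm.mul_apply]
      exact (ih x).trans (hstep ((τ ^ n) x))
  intro x y hxy
  obtain ⟨n, _, hn⟩ := hxy.exists_pow_eq'
  rw [← hn]
  exact hpow n x

lemma sameCycle_cases {τ : Equiv.Perm H} {a b : H} :
    ∀ x y : H, (τ * Equiv.swap a b).SameCycle x y →
      τ.SameCycle x y ∨ τ.SameCycle x b ∨ τ.SameCycle y b := by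
  intro x y hxy
  by_cases hxb : τ.SameCycle x b
  · exact Or.inr (Or.inl hxb)
  by_cases hxa : τ.SameCycle x a
  · by_cases hyb : τ.SameCycle y b
    · exact Or.inr (Or.inr hyb)
    · by_cases hya : τ.SameCycle y a
      · exact Or.inl (hxa.trans hya.symm)
      · exact Or.inl (iso_sameCycle hya hyb hxy.symm).symm
  · exact Or.inl (iso_sameCycle hxa hxb hxy)

lemma permOrbits_eq_oc (τ : Equiv.Perm H) : permOrbits τ = oc (Subgroup.zpowers τ) := rfl

lemma sameCycle_step_merge {τ : Equiv.Perm H} {a b : H} (hcon : (τ * Equiv.swap a b).SameCycle a b) :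
    ∀ x : H, (τ * Equiv.swap a b).SameCycle x (τ x) := by
  set τ' := τ * Equiv.swap a b with hτ'
  intro x
  by_cases hxa : x = a
  · rw [hxa]
    have h1 : τ' b = τ a := by
      rw [hτ', Equiv.Perm.mul_apply, Equiv.swap_apply_right]
    rw [← h1]
    exact hcon.trans (sameCycle_of_pow' (n := 1) (by rw [pow_one]))
  by_cases hxb : x = b
  · rw [hxb]
    have h1 : τ' a = τ b := by
      rw [hτ', Equiv.Perm.mul_apply, Equiv.swap_apply_left]
    rw [← h1]
    exact hcon.symm.trans (sameCycle_of_pow' (n := 1) (by rw [pow_one]))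
  · have h1 : τ' x = τ x := by
      rw [hτ', Equiv.Perm.mul_apply, Equiv.swap_apply_of_ne_of_ne hxa hxb]
    rw [← h1]
    exact sameCycle_of_pow' (n := 1) (by rw [pow_one])

lemma rel_h2_swap (τ : Equiv.Perm H) (a b : H) :
    ∀ x y : H, orbitRel (Subgroup.zpowers (τ * Equiv.swap a b)) H x y →
      orbitRel (Subgroup.zpowers τ) H x y ∨ orbitRel (Subgroup.zpowers τ) H x b ∨
        orbitRel (Subgroup.zpowers τ) H y b := by
  intro x y hxy
  rw [rel_zpowers_iff] at hxy
  rcases sameCycle_cases y x hxy with hc | hc | hc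
  · exact Or.inl ((rel_zpowers_iff τ x y).mpr hc)
  · exact Or.inr (Or.inr ((rel_zpowers_iff τ y b).mpr hc.symm))
  · exact Or.inr (Or.inl ((rel_zpowers_iff τ x b).mpr hc.symm))

lemma permOrbits_merge {τ : Equiv.Perm H} {a b : H} (hab : a ≠ b) (h : ¬ τ.SameCycle a b) :
    permOrbits τ = permOrbits (τ * Equiv.swap a b) + 1 := by
  set τ' := τ * Equiv.swap a b with hτ'
  have hcon : τ'.SameCycle a b := merge_connect hab h
  have hle : ∀ x y : H, orbitRel (Subgroup.zpowers τ) H x y →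
      orbitRel (Subgroup.zpowers τ') H x y := by
    intro x y hxy
    rw [rel_zpowers_iff] at hxy ⊢
    exact sameCycle_le_of_step (sameCycle_step_merge hcon) hxy
  have hlt : oc (Subgroup.zpowers τ') < oc (Subgroup.zpowers τ) := by
    refine oc_lt (a := a) (b := b) hle ?_ ?_
    · intro hc
      exact h ((rel_zpowers_iff τ a b).mp hc).symm
    · exact (rel_zpowers_iff τ' a b).mpr hcon.symm
  have hge : oc (Subgroup.zpowers τ) ≤ oc (Subgroup.zpowers τ') + 1 :=
    oc_le_succ hle (rel_h2_swap τ a b)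
  rw [permOrbits_eq_oc, permOrbits_eq_oc]
  omega

lemma permOrbits_split {τ : Equiv.Perm H} {a b : H} (hab : a ≠ b) (h : τ.SameCycle a b) :
    permOrbits (τ * Equiv.swap a b) = permOrbits τ + 1 := by
  have hd := split_disconnect hab h
  have hm := permOrbits_merge hab hd
  rwa [mul_assoc, Equiv.swap_mul_self, mul_one] at hm

/-! ### Group orbit count lemmas -/

lemma oc_insert_swap_eq {σ ρ : Equiv.Perm H} {a b : H} (hab : a ≠ b)
    (hρa : ρ a = a) (hρb : ρ b = b) :
    oc (Subgroup.closure {σ, ρ * Equiv.swap a b}) =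
      oc (Subgroup.closure {σ, ρ, Equiv.swap a b}) := by
  have hKle : Subgroup.closure ({σ, ρ * Equiv.swap a b} : Set (Equiv.Perm H)) ≤
      Subgroup.closure ({σ, ρ, Equiv.swap a b} : Set (Equiv.Perm H)) := by
    rw [Subgroup.closure_le]
    rintro x (rfl | rfl)
    · exact Subgroup.subset_closure (by simp)
    · exact mul_mem (Subgroup.subset_closure (by simp)) (Subgroup.subset_closure (by simp))
  have hb_eq : (ρ * Equiv.swap a b) a = b := by
    rw [Equiv.Perm.mul_apply, Equiv.swap_apply_left, hρb]
  have ha_eq : (ρ * Equiv.swap a b) b = a := by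
    rw [Equiv.Perm.mul_apply, Equiv.swap_apply_right, hρa]
  have hmem : (ρ * Equiv.swap a b) ∈ Subgroup.closure ({σ, ρ * Equiv.swap a b} : Set (Equiv.Perm H)) :=
    Subgroup.subset_closure (by simp)
  have hstep_s : ∀ x : H,
      orbitRel (Subgroup.closure ({σ, ρ * Equiv.swap a b} : Set (Equiv.Perm H))) H (σ x) x :=
    fun x => rel_of_mem (Subgroup.subset_closure (by simp)) x
  have hstep_r : ∀ x : H,
      orbitRel (Subgroup.closure ({σ, ρ * Equiv.swap a b} : Set (Equiv.Perm H))) H (ρ x) x := by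
    intro x
    by_cases hxa : x = a
    · rw [hxa, hρa]
    by_cases hxb : x = b
    · rw [hxb, hρb]
    · have he : ρ x = (ρ * Equiv.swap a b) x := by
        rw [Equiv.Perm.mul_apply, Equiv.swap_apply_of_ne_of_ne hxa hxb]
      rw [he]
      exact rel_of_mem hmem x
  have hstep_w : ∀ x : H,
      orbitRel (Subgroup.closure ({σ, ρ * Equiv.swap a b} : Set (Equiv.Perm H))) H
        ((Equiv.swap a b) x) x := by
    intro x
    by_cases hxa : x = a
    · rw [hxa, Equiv.swap_apply_left]
      have hr := rel_of_mem hmem a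
      rw [hb_eq] at hr
      exact hr
    by_cases hxb : x = b
    · rw [hxb, Equiv.swap_apply_right]
      have hr := rel_of_mem hmem b
      rw [ha_eq] at hr
      exact hr
    · rw [Equiv.swap_apply_of_ne_of_ne hxa hxb]
  have h21 : ∀ g ∈ ({σ, ρ, Equiv.swap a b} : Set (Equiv.Perm H)), ∀ x : H,
      orbitRel (Subgroup.closure ({σ, ρ * Equiv.swap a b} : Set (Equiv.Perm H))) H (g x) x := by
    rintro g hg x
    simp only [Set.mem_insert_iff, Set.mem_singleton_iff] at hg
    rcases hg with rfl | rfl | rfl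
    · exact hstep_s x
    · exact hstep_r x
    · exact hstep_w x
  apply le_antisymm
  · refine oc_le (fun x y hxy => ?_)
    rw [orbitRel_apply] at hxy
    obtain ⟨⟨g, hg⟩, rfl⟩ := hxy
    exact closure_step h21 g hg y
  · exact oc_le (rel_mono hKle)

lemma rel_K2_ab (σ ρ : Equiv.Perm H) (a b : H) :
    orbitRel (Subgroup.closure ({σ, ρ, Equiv.swap a b} : Set (Equiv.Perm H))) H a b := by
  have hr := rel_of_mem
    (G := Subgroup.closure ({σ, ρ, Equiv.swap a b} : Set (Equiv.Perm H)))
    (Subgroup.subset_closure (show Equiv.swap a b ∈ ({σ, ρ, Equiv.swap a b} : Set (Equiv.Perm H)) by simp)) b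
  rw [Equiv.swap_apply_right] at hr
  exact hr

lemma iso_group {σ ρ : Equiv.Perm H} {a b x y : H}
    (hxa : ¬ orbitRel (Subgroup.closure ({σ, ρ} : Set (Equiv.Perm H))) H x a)
    (hxb : ¬ orbitRel (Subgroup.closure ({σ, ρ} : Set (Equiv.Perm H))) H x b)
    (hxy : orbitRel (Subgroup.closure ({σ, ρ, Equiv.swap a b} : Set (Equiv.Perm H))) H x y) :
    orbitRel (Subgroup.closure ({σ, ρ} : Set (Equiv.Perm H))) H x y := by
  set T : Set H := {z | orbitRel (Subgroup.closure ({σ, ρ} : Set (Equiv.Perm H))) H z x} with hT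
  have haT : a ∉ T := fun hc => hxa (Setoid.symm' _ hc)
  have hbT : b ∉ T := fun hc => hxb (Setoid.symm' _ hc)
  have hTinv : ∀ g ∈ ({σ, ρ, Equiv.swap a b} : Set (Equiv.Perm H)), ∀ z ∈ T, g z ∈ T := by
    intro g hg z hz
    simp only [Set.mem_insert_iff, Set.mem_singleton_iff] at hg
    rcases hg with rfl | rfl | rfl
    · exact Setoid.trans' _ (rel_of_mem (Subgroup.subset_closure (by simp)) z) hz
    · exact Setoid.trans' _ (rel_of_mem (Subgroup.subset_closure (by simp)) z) hz
    · have hza : z ≠ a := fun hc => haT (hc ▸ hz)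
      have hzb : z ≠ b := fun hc => hbT (hc ▸ hz)
      rw [Equiv.swap_apply_of_ne_of_ne hza hzb]
      exact hz
  have hsym := Setoid.symm' _ hxy
  rw [orbitRel_apply] at hsym
  obtain ⟨⟨g, hg⟩, rfl⟩ := hsym
  have hxT : x ∈ T :=
    Setoid.refl' (orbitRel (Subgroup.closure ({σ, ρ} : Set (Equiv.Perm H))) H) x
  exact Setoid.symm' _ (closure_invariant T hTinv g hg x hxT)

lemma pair_subset_triple (σ ρ : Equiv.Perm H) (a b : H) :
    ({σ, ρ} : Set (Equiv.Perm H)) ⊆ ({σ, ρ, Equiv.swap a b} : Set (Equiv.Perm H)) := by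
  intro g hg
  rcases hg with rfl | rfl
  · exact Set.mem_insert _ _
  · exact Set.mem_insert_of_mem _ (Set.mem_insert _ _)

lemma oc_pair_conn {σ ρ : Equiv.Perm H} {a b : H}
    (hconn : orbitRel (Subgroup.closure ({σ, ρ} : Set (Equiv.Perm H))) H a b) :
    oc (Subgroup.closure ({σ, ρ, Equiv.swap a b} : Set (Equiv.Perm H))) =
      oc (Subgroup.closure ({σ, ρ} : Set (Equiv.Perm H))) := by
  apply le_antisymm
  · exact oc_le (rel_mono (Subgroup.closure_mono (pair_subset_triple σ ρ a b)))
  · have hstep_s : ∀ x : H,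
        orbitRel (Subgroup.closure ({σ, ρ} : Set (Equiv.Perm H))) H (σ x) x :=
      fun x => rel_of_mem (Subgroup.subset_closure (by simp)) x
    have hstep_r : ∀ x : H,
        orbitRel (Subgroup.closure ({σ, ρ} : Set (Equiv.Perm H))) H (ρ x) x :=
      fun x => rel_of_mem (Subgroup.subset_closure (by simp)) x
    have hstep_w : ∀ x : H,
        orbitRel (Subgroup.closure ({σ, ρ} : Set (Equiv.Perm H))) H ((Equiv.swap a b) x) x := by
      intro x
      by_cases hxa : x = a
      · rw [hxa, Equiv.swap_apply_left]
        exact Setoid.symm' _ hconn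
      by_cases hxb : x = b
      · rw [hxb, Equiv.swap_apply_right]
        exact hconn
      · rw [Equiv.swap_apply_of_ne_of_ne hxa hxb]
    have h21 : ∀ g ∈ ({σ, ρ, Equiv.swap a b} : Set (Equiv.Perm H)), ∀ x : H,
        orbitRel (Subgroup.closure ({σ, ρ} : Set (Equiv.Perm H))) H (g x) x := by
      intro g hg x
      simp only [Set.mem_insert_iff, Set.mem_singleton_iff] at hg
      rcases hg with rfl | rfl | rfl
      · exact hstep_s x
      · exact hstep_r x
      · exact hstep_w x
    refine oc_le (fun x y hxy => ?_)
    rw [orbitRel_apply] at hxy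
    obtain ⟨⟨g, hg⟩, rfl⟩ := hxy
    exact closure_step h21 g hg y

lemma oc_pair_disconn {σ ρ : Equiv.Perm H} {a b : H}
    (hconn : ¬ orbitRel (Subgroup.closure ({σ, ρ} : Set (Equiv.Perm H))) H a b) :
    oc (Subgroup.closure ({σ, ρ} : Set (Equiv.Perm H))) =
      oc (Subgroup.closure ({σ, ρ, Equiv.swap a b} : Set (Equiv.Perm H))) + 1 := by
  have hle : ∀ x y : H, orbitRel (Subgroup.closure ({σ, ρ} : Set (Equiv.Perm H))) H x y →
      orbitRel (Subgroup.closure ({σ, ρ, Equiv.swap a b} : Set (Equiv.Perm H))) H x y :=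
    rel_mono (Subgroup.closure_mono (pair_subset_triple σ ρ a b))
  have hlt : oc (Subgroup.closure ({σ, ρ, Equiv.swap a b} : Set (Equiv.Perm H))) <
      oc (Subgroup.closure ({σ, ρ} : Set (Equiv.Perm H))) :=
    oc_lt (a := a) (b := b) hle hconn (rel_K2_ab σ ρ a b)
  have h2 : ∀ x y : H,
      orbitRel (Subgroup.closure ({σ, ρ, Equiv.swap a b} : Set (Equiv.Perm H))) H x y →
      orbitRel (Subgroup.closure ({σ, ρ} : Set (Equiv.Perm H))) H x y ∨
      orbitRel (Subgroup.closure ({σ, ρ} : Set (Equiv.Perm H))) H x b ∨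
      orbitRel (Subgroup.closure ({σ, ρ} : Set (Equiv.Perm H))) H y b := by
    intro x y hxy
    by_cases hxb : orbitRel (Subgroup.closure ({σ, ρ} : Set (Equiv.Perm H))) H x b
    · exact Or.inr (Or.inl hxb)
    by_cases hxa : orbitRel (Subgroup.closure ({σ, ρ} : Set (Equiv.Perm H))) H x a
    · by_cases hyb : orbitRel (Subgroup.closure ({σ, ρ} : Set (Equiv.Perm H))) H y b
      · exact Or.inr (Or.inr hyb)
      by_cases hya : orbitRel (Subgroup.closure ({σ, ρ} : Set (Equiv.Perm H))) H y a
      · exact Or.inl (Setoid.trans' _ hxa (Setoid.symm' _ hya))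
      · exact Or.inl (Setoid.symm' _ (iso_group hya hyb (Setoid.symm' _ hxy)))
    · exact Or.inl (iso_group hxa hxb hxy)
  have hge := oc_le_succ hle h2
  omega

lemma restrictPerm_apply' (θ : Equiv.Perm H) (S : Finset H) (hcl : ∀ a ∈ S, θ a ∈ S)
    (hinv : ∀ a, θ (θ a) = a) (x : H) :
    restrictPerm θ S x = if x ∈ S then θ x else x := by
  rw [restrictPerm, dif_pos ⟨hcl, hinv⟩]
  rfl

lemma restrictPerm_empty (θ : Equiv.Perm H) (hinv : ∀ a, θ (θ a) = a) :
    restrictPerm θ (∅ : Finset H) = 1 := by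
  ext x
  rw [restrictPerm_apply' θ ∅ (by simp) hinv]
  simp

lemma closure_pair_one (σ : Equiv.Perm H) :
    Subgroup.closure ({σ, 1} : Set (Equiv.Perm H)) = Subgroup.zpowers σ := by
  apply le_antisymm
  · rw [Subgroup.closure_le]
    intro x hx
    rcases hx with rfl | rfl
    · exact Subgroup.mem_zpowers _
    · exact Subgroup.one_mem _
  · rw [Subgroup.zpowers_le]
    exact Subgroup.subset_closure (by simp)

end BRAux

open MulAction in
/-- **Evenness and nonnegativity of the `z`-exponent of the Bollobás–Riordan
polynomial.**  For an orientable ribbon graph encoded by a combinatorial map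
`(H, σ, θ)` and every spanning subgraph `F ⊆ E` (encoded by a `θ`-invariant set `S`
of half-edges), the integer `k(F) - bc(F) + n(F)` is nonnegative and even (it is
twice the genus of the orientable surface `F`). -/
theorem z_exponent_nonneg_and_even
    {H : Type*} [Fintype H] [DecidableEq H] (σ θ : Equiv.Perm H)
    (hinv : ∀ a, θ (θ a) = a) (hfp : ∀ a, θ a ≠ a) :
    ∀ S : Finset H, (∀ a ∈ S, θ a ∈ S) →
      0 ≤ (kCount σ θ S : ℤ) - (bcCount σ θ S : ℤ) + nCount σ θ S ∧
      2 ∣ ((kCount σ θ S : ℤ) - (bcCount σ θ S : ℤ) + nCount σ θ S) := by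
  intro S
  induction S using Finset.strongInduction with
  | _ S ih =>
  intro hScl
  rcases eq_or_ne S ∅ with rfl | hSne
  · -- base case
    have hre := BRAux.restrictPerm_empty θ hinv
    have hbc : bcCount σ θ (∅ : Finset H) = vCount σ := by
      rw [bcCount, hre, mul_one]; rfl
    have hk : kCount σ θ (∅ : Finset H) = vCount σ := by
      have h1 : kCount σ θ (∅ : Finset H)
          = BRAux.oc (Subgroup.closure {σ, restrictPerm θ (∅ : Finset H)}) := rfl
      rw [h1, hre, BRAux.oc_congr (BRAux.closure_pair_one σ)]
      rfl
    have he : eCount (∅ : Finset H) = 0 := by simp [eCount]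
    rw [nCount, rCount, hbc, hk, he]
    refine ⟨by omega, by omega⟩
  · -- inductive step
    obtain ⟨a, haS⟩ := Finset.nonempty_iff_ne_empty.mpr hSne
    have hbS : θ a ∈ S := hScl a haS
    have hab : a ≠ θ a := fun h => hfp a h.symm
    set b := θ a with hbdef
    set S' := S \ {a, b} with hS'def
    have hsubT : ({a, b} : Finset H) ⊆ S := by
      intro x hx
      rcases Finset.mem_insert.mp hx with rfl | hx
      · exact haS
      · rw [Finset.mem_singleton] at hx
        rw [hx]
        exact hbS
    have hS'ss : S' ⊂ S := Finset.sdiff_ssubset hsubT ⟨a, by simp⟩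
    have hS'cl : ∀ x ∈ S', θ x ∈ S' := by
      intro x hx
      rw [hS'def, Finset.mem_sdiff] at hx ⊢
      obtain ⟨hxS, hxab⟩ := hx
      refine ⟨hScl x hxS, ?_⟩
      simp only [Finset.mem_insert, Finset.mem_singleton] at hxab ⊢
      push_neg at hxab ⊢
      obtain ⟨hxa, hxb⟩ := hxab
      constructor
      · intro hc
        apply hxb
        rw [← hinv x, hc, hbdef]
      · intro hc
        apply hxa
        rw [← hinv x, hc, hbdef, hinv a]
    have hcard : S.card = S'.card + 2 := by
      have h2 : ({a, b} : Finset H).card = 2 := by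
        rw [Finset.card_insert_of_notMem (by simp [hab]), Finset.card_singleton]
      have hle := Finset.card_le_card hsubT
      rw [hS'def, Finset.card_sdiff_of_subset hsubT, h2]
      omega
    have haS' : a ∉ S' := by simp [hS'def]
    have hbS' : b ∉ S' := by simp [hS'def]
    set π' := restrictPerm θ S' with hπ'
    have hπ'a : π' a = a := by
      rw [hπ', BRAux.restrictPerm_apply' θ S' hS'cl hinv, if_neg haS']
    have hπ'b : π' b = b := by
      rw [hπ', BRAux.restrictPerm_apply' θ S' hS'cl hinv, if_neg hbS']
    have hππ : restrictPerm θ S = π' * Equiv.swap a b := by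
      ext x
      rw [BRAux.restrictPerm_apply' θ S hScl hinv, Equiv.Perm.mul_apply, hπ',
        BRAux.restrictPerm_apply' θ S' hS'cl hinv]
      by_cases hxa : x = a
      · rw [hxa, Equiv.swap_apply_left, if_pos haS, if_neg hbS']
      by_cases hxb : x = b
      · rw [hxb, Equiv.swap_apply_right, if_pos hbS, if_neg haS', hbdef, hinv a]
      · rw [Equiv.swap_apply_of_ne_of_ne hxa hxb]
        by_cases hxS : x ∈ S
        · have hxS' : x ∈ S' := by
            rw [hS'def, Finset.mem_sdiff]
            exact ⟨hxS, by simp [hxa, hxb]⟩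
          rw [if_pos hxS, if_pos hxS']
        · have hxS' : x ∉ S' := fun hc => hxS (Finset.mem_sdiff.mp (hS'def ▸ hc)).1
          rw [if_neg hxS, if_neg hxS']
    obtain ⟨ih0, ih2⟩ := ih S' hS'ss hS'cl
    have hkS : kCount σ θ S
        = BRAux.oc (Subgroup.closure ({σ, π', Equiv.swap a b} : Set (Equiv.Perm H))) := by
      have h1 : kCount σ θ S = BRAux.oc (Subgroup.closure {σ, restrictPerm θ S}) := rfl
      rw [h1, hππ]
      exact BRAux.oc_insert_swap_eq hab hπ'a hπ'b
    have hkS' : kCount σ θ S'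
        = BRAux.oc (Subgroup.closure ({σ, π'} : Set (Equiv.Perm H))) := rfl
    have hbcS : bcCount σ θ S = permOrbits ((σ * π') * Equiv.swap a b) := by
      rw [bcCount, hππ, ← mul_assoc]
    have hbcS' : bcCount σ θ S' = permOrbits (σ * π') := rfl
    have heS : eCount S = eCount S' + 1 := by
      have hd : S.card / 2 = S'.card / 2 + 1 := by omega
      rw [eCount, eCount, hd]
      push_cast
      ring
    rw [nCount, rCount] at ih0 ih2 ⊢
    by_cases hconn : orbitRel (Subgroup.closure ({σ, π'} : Set (Equiv.Perm H))) H a b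
    · have hkk : kCount σ θ S = kCount σ θ S' := by
        rw [hkS, hkS']
        exact BRAux.oc_pair_conn hconn
      by_cases hsc : (σ * π').SameCycle a b
      · have hb2 : bcCount σ θ S = bcCount σ θ S' + 1 := by
          rw [hbcS, hbcS']
          exact BRAux.permOrbits_split hab hsc
        refine ⟨by omega, by omega⟩
      · have hb2 : bcCount σ θ S' = bcCount σ θ S + 1 := by
          rw [hbcS, hbcS']
          exact BRAux.permOrbits_merge hab hsc
        refine ⟨by omega, by omega⟩
    · have hkk : kCount σ θ S' = kCount σ θ S + 1 := by
        rw [hkS, hkS']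
        exact BRAux.oc_pair_disconn hconn
      have hsc : ¬ (σ * π').SameCycle a b := by
        intro hc
        apply hconn
        obtain ⟨i, hi⟩ := hc
        rw [MulAction.orbitRel_apply, MulAction.mem_orbit_iff]
        refine ⟨⟨((σ * π') ^ i)⁻¹,
          inv_mem (zpow_mem (mul_mem (Subgroup.subset_closure (by simp))
            (Subgroup.subset_closure (by simp))) i)⟩, ?_⟩
        show ((σ * π') ^ i)⁻¹ b = a
        rw [← hi]
        exact ((σ * π') ^ i).symm_apply_apply a
      have hb2 : bcCount σ θ S' = bcCount σ θ S + 1 := by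
        rw [hbcS, hbcS']
        exact BRAux.permOrbits_merge hab hsc
      refine ⟨by omega, by omega⟩
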